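/- Let L₁ and L₂ be finite-dimensional Lie algebras over a field F and let L = L₁ × L₂ be their direct sum. Then for every x = (x₁, x₂) ∈ L, sol_L(x) = sol_{L₁}(x₁) × sol_{L₂}(x₂); that is, (y₁, y₂) ∈ sol_L((x₁, x₂)) if and only if y₁ ∈ sol_{L₁}(x₁) and y₂ ∈ sol_{L₂}(x₂). -/

import Mathlib

section ProdLie

variable (F : Type*) (L₁ L₂ : Type*) [Field F] [LieRing L₁] [LieAlgebra F L₁]
  [LieRing L₂] [LieAlgebra F L₂]

/-- The componentwise bracket on the product. -/
instance Prod.instBracketProd : Bracket (L₁ × L₂) (L₁ × L₂) :=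
  ⟨fun x y => (⁅x.1, y.1⁆, ⁅x.2, y.2⁆)⟩

@[simp] theorem Prod.bracket_def (x y : L₁ × L₂) :
    ⁅x, y⁆ = (⁅x.1, y.1⁆, ⁅x.2, y.2⁆) := rfl

/-- The direct sum (product) of two Lie rings, with componentwise bracket. -/
instance Prod.instLieRingProd : LieRing (L₁ × L₂) where
  add_lie x y z := by ext <;> simp [add_lie]
  lie_add x y z := by ext <;> simp [lie_add]
  lie_self x := by ext <;> simp
  leibniz_lie x y z := by
    ext <;> simp only [Prod.bracket_def, Prod.fst_add, Prod.snd_add] <;>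
      exact leibniz_lie _ _ _

/-- The direct sum (product) of two Lie algebras. -/
instance Prod.instLieAlgebraProd : LieAlgebra F (L₁ × L₂) where
  lie_smul t x y := by ext <;> simp [lie_smul]

end ProdLie


section AuxSolv

variable (F : Type*) (L₁ L₂ : Type*) [Field F] [LieRing L₁] [LieAlgebra F L₁]
  [LieRing L₂] [LieAlgebra F L₂]

/-- First projection as a Lie algebra hom. -/
def LieHom.prodFst : (L₁ × L₂) →ₗ⁅F⁆ L₁ :=
  { LinearMap.fst F L₁ L₂ with map_lie' := fun {_ _} => rfl }

/-- Second projection as a Lie algebra hom. -/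
def LieHom.prodSnd : (L₁ × L₂) →ₗ⁅F⁆ L₂ :=
  { LinearMap.snd F L₁ L₂ with map_lie' := fun {_ _} => rfl }

/-- Pairing of two Lie algebra homs. -/
def LieHom.prodMk {M : Type*} [LieRing M] [LieAlgebra F M]
    (f : M →ₗ⁅F⁆ L₁) (g : M →ₗ⁅F⁆ L₂) : M →ₗ⁅F⁆ (L₁ × L₂) :=
  { LinearMap.prod f.toLinearMap g.toLinearMap with
    map_lie' := fun {a b} => by
      ext <;> simp }

theorem prod_isSolvable (F : Type*) [Field F] [LieAlgebra F L₁] [LieAlgebra F L₂]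
    [LieAlgebra.IsSolvable L₁] [LieAlgebra.IsSolvable L₂] :
    LieAlgebra.IsSolvable (L₁ × L₂) := by
  obtain ⟨k₁, hk₁⟩ := LieAlgebra.IsSolvable.solvable F L₁
  obtain ⟨k₂, hk₂⟩ := LieAlgebra.IsSolvable.solvable F L₂
  refine LieAlgebra.IsSolvable.mk (R := F) (k := max k₁ k₂) ?_
  rw [eq_bot_iff]
  intro z hz
  have h1 : (LieHom.prodFst F L₁ L₂) z = 0 := by
    have : (LieHom.prodFst F L₁ L₂) z ∈
        LieIdeal.map (LieHom.prodFst F L₁ L₂) (LieAlgebra.derivedSeries F (L₁ × L₂) (max k₁ k₂)) :=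
      LieIdeal.mem_map hz
    have h2 := LieIdeal.derivedSeries_map_le (f := LieHom.prodFst F L₁ L₂) (max k₁ k₂)
    have h3 : LieAlgebra.derivedSeries F L₁ (max k₁ k₂) ≤ LieAlgebra.derivedSeries F L₁ k₁ :=
      LieAlgebra.derivedSeriesOfIdeal_le (le_refl ⊤) (le_max_left _ _)
    have := h3 (h2 this)
    rwa [hk₁, LieSubmodule.mem_bot] at this
  have h1' : (LieHom.prodSnd F L₁ L₂) z = 0 := by
    have : (LieHom.prodSnd F L₁ L₂) z ∈
        LieIdeal.map (LieHom.prodSnd F L₁ L₂) (LieAlgebra.derivedSeries F (L₁ × L₂) (max k₁ k₂)) :=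
      LieIdeal.mem_map hz
    have h2 := LieIdeal.derivedSeries_map_le (f := LieHom.prodSnd F L₁ L₂) (max k₁ k₂)
    have h3 : LieAlgebra.derivedSeries F L₂ (max k₁ k₂) ≤ LieAlgebra.derivedSeries F L₂ k₂ :=
      LieAlgebra.derivedSeriesOfIdeal_le (le_refl ⊤) (le_max_right _ _)
    have := h3 (h2 this)
    rwa [hk₂, LieSubmodule.mem_bot] at this
  rw [LieSubmodule.mem_bot]
  exact Prod.ext h1 h1'

/-- A subalgebra contained in a solvable subalgebra is solvable. -/
theorem isSolvable_of_le {L : Type*} [LieRing L] [LieAlgebra F L]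
    {K K' : LieSubalgebra F L} (h : K ≤ K') [LieAlgebra.IsSolvable K'] :
    LieAlgebra.IsSolvable K :=
  (LieSubalgebra.inclusion_injective h).lieAlgebra_isSolvable (f := LieSubalgebra.inclusion h)

end AuxSolv

/-- The solvabilizer of `z` in `L`. -/
def solvabilizerElt (F : Type*) {L : Type*} [Field F] [LieRing L] [LieAlgebra F L]
    (z : L) : Set L :=
  {x : L | LieAlgebra.IsSolvable (LieSubalgebra.lieSpan F L {x, z})}

/-- The solvabilizer of an element of a direct sum is the product of the
componentwise solvabilizers. -/
theorem solvabilizerElt_prod (F L₁ L₂ : Type*) [Field F]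
    [LieRing L₁] [LieAlgebra F L₁] [LieRing L₂] [LieAlgebra F L₂]
    [Module.Finite F L₁] [Module.Finite F L₂] (x : L₁ × L₂) :
    solvabilizerElt F x = solvabilizerElt F x.1 ×ˢ solvabilizerElt F x.2 := by
  ext y
  simp only [Set.mem_prod, solvabilizerElt, Set.mem_setOf_eq]
  constructor
  · intro h
    set S := LieSubalgebra.lieSpan F (L₁ × L₂) {y, x} with hS
    have hyS : y ∈ S := LieSubalgebra.subset_lieSpan (Set.mem_insert _ _)
    have hxS : x ∈ S := LieSubalgebra.subset_lieSpan (Set.mem_insert_of_mem _ rfl)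
    constructor
    · let f : S →ₗ⁅F⁆ L₁ := (LieHom.prodFst F L₁ L₂).comp S.incl
      have : LieAlgebra.IsSolvable f.range := f.isSolvable_range
      refine isSolvable_of_le F (K' := f.range) ?_
      rw [LieSubalgebra.lieSpan_le]
      rintro a (rfl | rfl)
      · exact ⟨⟨y, hyS⟩, rfl⟩
      · exact ⟨⟨x, hxS⟩, rfl⟩
    · let f : S →ₗ⁅F⁆ L₂ := (LieHom.prodSnd F L₁ L₂).comp S.incl
      have : LieAlgebra.IsSolvable f.range := f.isSolvable_range
      refine isSolvable_of_le F (K' := f.range) ?_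
      rw [LieSubalgebra.lieSpan_le]
      rintro a (rfl | rfl)
      · exact ⟨⟨y, hyS⟩, rfl⟩
      · exact ⟨⟨x, hxS⟩, rfl⟩
  · rintro ⟨h₁, h₂⟩
    set S₁ := LieSubalgebra.lieSpan F L₁ {y.1, x.1} with hS₁
    set S₂ := LieSubalgebra.lieSpan F L₂ {y.2, x.2} with hS₂
    let g : (S₁ × S₂) →ₗ⁅F⁆ (L₁ × L₂) :=
      LieHom.prodMk F L₁ L₂ (S₁.incl.comp (LieHom.prodFst F S₁ S₂))
        (S₂.incl.comp (LieHom.prodSnd F S₁ S₂))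
    have : LieAlgebra.IsSolvable g.range :=
      (haveI := prod_isSolvable (F := F) (L₁ := S₁) (L₂ := S₂); g.isSolvable_range)
    refine isSolvable_of_le F (K' := g.range) ?_
    rw [LieSubalgebra.lieSpan_le]
    rintro a (rfl | rfl)
    · exact ⟨(⟨a.1, LieSubalgebra.subset_lieSpan (Set.mem_insert _ _)⟩,
        ⟨a.2, LieSubalgebra.subset_lieSpan (Set.mem_insert _ _)⟩), rfl⟩
    · exact ⟨(⟨a.1, LieSubalgebra.subset_lieSpan (Set.mem_insert_of_mem _ rfl)⟩,
        ⟨a.2, LieSubalgebra.subset_lieSpan (Set.mem_insert_of_mem _ rfl)⟩), rfl⟩
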